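/- arXiv:1512.07786 — 2 statements merged into one kernel-verified Lean document; each statement's English description precedes it below -/
import Mathlib

section
/- For every natural number m ≥ 1 and every real p > 0, ∫_0^1 |∑_{k=2^m}^{2^{m+1}-1} W_k(x)|^p dx = 2^{m(p-1)}. -/
open MeasureTheory Filter

noncomputable def rademacher (n : ℕ) (x : ℝ) : ℝ :=
  Real.sign (Real.sin ((2:ℝ)^n * Real.pi * x))

noncomputable def walsh (n : ℕ) (x : ℝ) : ℝ :=
  ∏ i ∈ Finset.range (n+1), if n.testBit i then rademacher (i+1) x else 1

lemma walsh_extend (j N : ℕ) (h : j + 1 ≤ N) (x : ℝ) :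
    (∏ i ∈ Finset.range N, if j.testBit i then rademacher (i+1) x else 1) = walsh j x := by
  unfold walsh
  refine (Finset.prod_subset (Finset.range_subset_range.mpr h) ?_).symm
  intro i hi hni
  simp only [Finset.mem_range, not_lt] at hni
  have : j < 2 ^ i := lt_of_lt_of_le (Nat.lt_two_pow_self (n := j)) (Nat.pow_le_pow_right (by norm_num) (by omega))
  rw [Nat.testBit_eq_false_of_lt this]
  simp

lemma walsh_two_pow_add (m j : ℕ) (hj : j < 2^m) (x : ℝ) :
    walsh (2^m + j) x = rademacher (m+1) x * walsh j x := by
  have hjm : j.testBit m = false := Nat.testBit_eq_false_of_lt hj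
  have hmem : m ∈ Finset.range (2^m + j + 1) := by
    simp only [Finset.mem_range]
    have := Nat.lt_two_pow_self (n := m); omega
  rw [← walsh_extend j (2^m + j + 1) (by omega) x]
  unfold walsh
  rw [← Finset.mul_prod_erase _ _ hmem]
  have hbit : (2^m + j).testBit m = true := by
    rw [Nat.testBit_two_pow_add_eq, hjm]; rfl
  rw [hbit, if_pos rfl]
  conv_rhs => rw [← Finset.mul_prod_erase (Finset.range (2^m + j + 1)) _ hmem]
  rw [hjm]
  simp only [Bool.false_eq_true, if_false, one_mul]
  congr 1
  apply Finset.prod_congr rfl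
  intro i hi
  have hne : i ≠ m := Finset.ne_of_mem_erase hi
  rcases lt_or_gt_of_ne hne with h | h
  · rw [Nat.testBit_two_pow_add_gt h]
  · have h1 : 2^m + j < 2^i := by
      calc 2^m + j < 2^m + 2^m := by omega
      _ = 2^(m+1) := by ring
      _ ≤ 2^i := Nat.pow_le_pow_right (by norm_num) (by omega)
    have h2 : j < 2^i := by omega
    rw [Nat.testBit_eq_false_of_lt h1, Nat.testBit_eq_false_of_lt h2]

lemma sum_walsh_range (m : ℕ) (x : ℝ) :
    ∑ j ∈ Finset.range (2^m), walsh j x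
      = ∏ i ∈ Finset.range m, (1 + rademacher (i+1) x) := by
  induction m with
  | zero => simp [walsh]
  | succ m ih =>
    have h2 : 2^(m+1) = 2^m + 2^m := by ring
    rw [h2, Finset.sum_range_add]
    have : ∀ j ∈ Finset.range (2^m), walsh (2^m + j) x = rademacher (m+1) x * walsh j x := by
      intro j hj
      exact walsh_two_pow_add m j (Finset.mem_range.mp hj) x
    rw [Finset.sum_congr rfl this, ← Finset.mul_sum, Finset.prod_range_succ, ← ih]
    ring

lemma sin_two_pi_nonpos {y : ℝ} (h1 : 1/2 ≤ y) (h2 : y ≤ 1) :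
    Real.sin (2 * Real.pi * y) ≤ 0 := by
  have hpi := Real.pi_pos
  have : Real.sin (2 * Real.pi * y - Real.pi) = -Real.sin (2 * Real.pi * y) :=
    Real.sin_sub_pi _
  have h3 : 0 ≤ Real.sin (2 * Real.pi * y - Real.pi) :=
    Real.sin_nonneg_of_nonneg_of_le_pi (by nlinarith) (by nlinarith)
  linarith [this ▸ h3]

lemma abs_rademacher_eq_one {n : ℕ} {x : ℝ}
    (h : Real.sin ((2:ℝ)^n * Real.pi * x) ≠ 0) : |rademacher n x| = 1 := by
  unfold rademacher
  rcases lt_or_gt_of_ne h with hlt | hgt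
  · rw [Real.sign_of_neg hlt]; norm_num
  · rw [Real.sign_of_pos hgt]; norm_num

lemma pointwise_key (m : ℕ) (hm : 1 ≤ m) (p : ℝ) (hp : 0 < p) (x : ℝ)
    (hx : x ∈ Set.Icc (0:ℝ) 1)
    (hsin : ∀ i : ℕ, Real.sin ((2:ℝ)^(i+1) * Real.pi * x) ≠ 0) :
    |∑ k ∈ Finset.Ico (2^m) (2^(m+1)), walsh k x| ^ p
      = Set.indicator (Set.Ioo (0:ℝ) (((2:ℝ)^m)⁻¹))
          (fun _ => ((2:ℝ)^m) ^ p) x := by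
  have hpi := Real.pi_pos
  obtain ⟨hx0, hx1⟩ := hx
  -- rewrite the sum
  have hsum : ∑ k ∈ Finset.Ico (2^m) (2^(m+1)), walsh k x
      = rademacher (m+1) x * ∏ i ∈ Finset.range m, (1 + rademacher (i+1) x) := by
    rw [Finset.sum_Ico_eq_sum_range]
    have hms : 2^(m+1) - 2^m = 2^m := by
      rw [pow_succ]; omega
    rw [hms]
    have : ∀ j ∈ Finset.range (2^m), walsh (2^m + j) x = rademacher (m+1) x * walsh j x :=
      fun j hj => walsh_two_pow_add m j (Finset.mem_range.mp hj) x
    rw [Finset.sum_congr rfl this, ← Finset.mul_sum, sum_walsh_range]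
  rw [hsum]
  have hx0' : x ≠ 0 := by
    rintro rfl; exact hsin 0 (by simp)
  have hxpos : 0 < x := lt_of_le_of_ne hx0 (Ne.symm hx0')
  by_cases hmem : x ∈ Set.Ioo (0:ℝ) (((2:ℝ)^m)⁻¹)
  · -- all rademachers 1
    rw [Set.indicator_of_mem hmem]
    obtain ⟨_, hxlt⟩ := hmem
    have hrad : ∀ i < m, rademacher (i+1) x = 1 := by
      intro i hi
      unfold rademacher
      apply Real.sign_of_pos
      apply Real.sin_pos_of_pos_of_lt_pi
      · positivity
      · have h1 : (2:ℝ)^(i+1) * x < 1 := by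
          have h2 : (2:ℝ)^(i+1) ≤ 2^m := by
            apply pow_le_pow_right₀ (by norm_num) (by omega)
          have h3 : (0:ℝ) < 2^m := by positivity
          calc (2:ℝ)^(i+1) * x ≤ 2^m * x := by nlinarith
          _ < 2^m * ((2^m)⁻¹ : ℝ) := by nlinarith
          _ = 1 := by field_simp
        nlinarith
    have hprod : ∏ i ∈ Finset.range m, (1 + rademacher (i+1) x) = 2^m := by
      rw [Finset.prod_congr rfl (fun i hi => by
        rw [hrad i (Finset.mem_range.mp hi)])]
      norm_num
    rw [hprod, abs_mul, abs_rademacher_eq_one (hsin m)]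
    rw [abs_of_pos (by positivity : (0:ℝ) < (2:ℝ)^m)]
    rw [one_mul]
  · -- product vanishes
    rw [Set.indicator_of_notMem hmem]
    have hxge : ((2:ℝ)^m)⁻¹ < x ∨ x = ((2:ℝ)^m)⁻¹ ∨ x < ((2:ℝ)^m)⁻¹ := by
      rcases lt_trichotomy x (((2:ℝ)^m)⁻¹) with h | h | h
      · right; right; exact h
      · right; left; exact h
      · left; exact h
    have hxne : x ≠ ((2:ℝ)^m)⁻¹ := by
      rintro rfl
      apply hsin m
      have : (2:ℝ)^(m+1) * Real.pi * ((2:ℝ)^m)⁻¹ = 2 * Real.pi := by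
        rw [pow_succ]; field_simp
      rw [this]
      simpa using Real.sin_int_mul_pi 2
    have hxgt : ((2:ℝ)^m)⁻¹ < x := by
      rcases hxge with h | h | h
      · exact h
      · exact absurd h hxne
      · exact absurd ⟨hxpos, h⟩ hmem
    have hx1' : x ≠ 1 := by
      rintro rfl
      apply hsin 1
      have : (2:ℝ)^(1+1) * Real.pi * 1 = (4:ℤ) * Real.pi := by push_cast; ring
      rw [this]
      exact Real.sin_int_mul_pi 4
    have hxlt1 : x < 1 := lt_of_le_of_ne hx1 hx1'
    -- show some rademacher is -1
    have hex : ∃ i, i < m ∧ rademacher (i+1) x = -1 := by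
      by_contra hc
      push_neg at hc
      have hpos : ∀ i < m, 0 < Real.sin ((2:ℝ)^(i+1) * Real.pi * x) := by
        intro i hi
        rcases lt_or_gt_of_ne (hsin i) with hlt | hgt
        · exact absurd (Real.sign_of_neg hlt) (hc i hi)
        · exact hgt
      have hind : ∀ i, i ≤ m → (2:ℝ)^i * x < 1 := by
        intro i
        induction i with
        | zero => intro _; simpa using hxlt1
        | succ i ih =>
          intro hle
          have hil : i < m := by omega
          have h1 : (2:ℝ)^i * x < 1 := ih (by omega)
          have h2 : 0 < Real.sin (2 * Real.pi * ((2:ℝ)^i * x)) := by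
            have : 2 * Real.pi * ((2:ℝ)^i * x) = (2:ℝ)^(i+1) * Real.pi * x := by ring
            rw [this]; exact hpos i hil
          have h3 : (2:ℝ)^i * x < 1/2 := by
            by_contra hge
            push_neg at hge
            exact absurd h2 (not_lt.mpr (sin_two_pi_nonpos hge h1.le))
          calc (2:ℝ)^(i+1) * x = 2 * ((2:ℝ)^i * x) := by ring
          _ < 1 := by linarith
      have h2m : (0:ℝ) < 2^m := by positivity
      have hinv : (2:ℝ)^m * ((2:ℝ)^m)⁻¹ = 1 := by field_simp
      nlinarith [hind m le_rfl, hxgt, h2m]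
    obtain ⟨i, hi, hri⟩ := hex
    have : ∏ j ∈ Finset.range m, (1 + rademacher (j+1) x) = 0 :=
      Finset.prod_eq_zero (Finset.mem_range.mpr hi) (by rw [hri]; ring)
    rw [this, mul_zero, abs_zero]
    exact Real.zero_rpow hp.ne'

theorem walsh_block_sum_Lp_norm (m : ℕ) (hm : 1 ≤ m) (p : ℝ) (hp : 0 < p) :
    ∫ x in Set.Icc (0:ℝ) 1, |∑ k ∈ Finset.Ico (2^m) (2^(m+1)), walsh k x| ^ p
      = (2:ℝ) ^ ((m:ℝ) * (p - 1)) := by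
  have hae : ∀ᵐ x : ℝ, ∀ i : ℕ, Real.sin ((2:ℝ)^(i+1) * Real.pi * x) ≠ 0 := by
    rw [ae_all_iff]
    intro i
    have hcnt : {x : ℝ | Real.sin ((2:ℝ)^(i+1) * Real.pi * x) = 0}.Countable := by
      have hsub : {x : ℝ | Real.sin ((2:ℝ)^(i+1) * Real.pi * x) = 0}
          ⊆ Set.range (fun n : ℤ => (n:ℝ) / (2:ℝ)^(i+1)) := by
        intro x hx
        rw [Set.mem_setOf, Real.sin_eq_zero_iff] at hx
        obtain ⟨n, hn⟩ := hx
        refine ⟨n, ?_⟩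
        have hpi := Real.pi_pos
        have h2 : (0:ℝ) < 2^(i+1) := by positivity
        field_simp
        nlinarith [hn]
      exact Set.Countable.mono hsub (Set.countable_range _)
    rw [ae_iff]
    simpa using hcnt.measure_zero volume
  have hcong : ∫ x in Set.Icc (0:ℝ) 1, |∑ k ∈ Finset.Ico (2^m) (2^(m+1)), walsh k x| ^ p
      = ∫ x in Set.Icc (0:ℝ) 1,
          Set.indicator (Set.Ioo (0:ℝ) (((2:ℝ)^m)⁻¹)) (fun _ => ((2:ℝ)^m) ^ p) x := by
    apply setIntegral_congr_ae measurableSet_Icc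
    filter_upwards [hae] with x hx hxIcc
    exact pointwise_key m hm p hp x hxIcc hx
  rw [hcong, setIntegral_indicator measurableSet_Ioo]
  have hsub : Set.Icc (0:ℝ) 1 ∩ Set.Ioo (0:ℝ) (((2:ℝ)^m)⁻¹) = Set.Ioo (0:ℝ) (((2:ℝ)^m)⁻¹) := by
    apply Set.inter_eq_self_of_subset_right
    intro y hy
    have h1 : ((2:ℝ)^m)⁻¹ ≤ 1 := by
      rw [inv_le_one_iff₀]
      right
      exact one_le_pow₀ (by norm_num)
    exact ⟨hy.1.le, le_trans hy.2.le h1⟩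
  rw [hsub, setIntegral_const, Real.volume_real_Ioo_of_le (by positivity), sub_zero,
    smul_eq_mul]
  have h2m : (0:ℝ) < 2^m := by positivity
  rw [← Real.rpow_natCast 2 m, ← Real.rpow_neg (by norm_num : (0:ℝ) ≤ 2) (m:ℝ),
    ← Real.rpow_mul (by norm_num : (0:ℝ) ≤ 2) (m:ℝ) p,
    ← Real.rpow_add (by norm_num : (0:ℝ) < 2)]
  ring_nf
end

section
/- For any natural numbers m and M with 2^m ≤ M < 2^{m+1}, and any real coefficients a_{2^m}, ..., a_{2^{m+1}-1}, the L^1[0,1] norm of the partial sum ∑_{k=2^m}^{M} a_k W_k is at most the L^2[0,1] norm of the full block sum ∑_{k=2^m}^{2^{m+1}-1} a_k W_k. -/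
open MeasureTheory Filter

lemma measurable_sign : Measurable Real.sign := by
  have : Real.sign = fun r : ℝ => if r < 0 then (-1:ℝ) else if 0 < r then 1 else 0 := by
    funext r; rfl
  rw [this]
  exact Measurable.ite (measurableSet_lt measurable_id measurable_const)
    measurable_const (Measurable.ite (measurableSet_lt measurable_const measurable_id)
      measurable_const measurable_const)

lemma measurable_rademacher (n : ℕ) : Measurable (rademacher n) :=
  measurable_sign.comp (by fun_prop)

lemma abs_rademacher_le (n : ℕ) (x : ℝ) : |rademacher n x| ≤ 1 := by
  rcases Real.sign_apply_eq (Real.sin ((2:ℝ)^n * Real.pi * x)) with h | h | h <;>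
    simp [rademacher, h]

lemma measurable_walsh (n : ℕ) : Measurable (walsh n) := by
  unfold walsh
  exact Finset.measurable_prod _ (fun i _ => by
    by_cases h : n.testBit i <;> simp [h, measurable_rademacher])

lemma abs_walsh_le (n : ℕ) (x : ℝ) : |walsh n x| ≤ 1 := by
  unfold walsh
  calc |∏ i ∈ Finset.range (n+1), if n.testBit i then rademacher (i+1) x else 1|
      = ∏ i ∈ Finset.range (n+1), |if n.testBit i then rademacher (i+1) x else 1| := by
        rw [Finset.abs_prod]
    _ ≤ ∏ i ∈ Finset.range (n+1), 1 := Finset.prod_le_prod (fun i _ => abs_nonneg _)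
        (fun i _ => by by_cases h : n.testBit i <;> simp [h, abs_rademacher_le])
    _ = 1 := by simp

lemma integrableOn_walsh_mul (n k : ℕ) :
    IntegrableOn (fun x => walsh n x * walsh k x) (Set.Icc (0:ℝ) 1) := by
  have hm : Measurable (fun x => walsh n x * walsh k x) :=
    (measurable_walsh n).mul (measurable_walsh k)
  refine Integrable.mono' (integrable_const 1) hm.aestronglyMeasurable.restrict ?_
  filter_upwards with x
  rw [norm_mul]
  calc ‖walsh n x‖ * ‖walsh k x‖ ≤ 1 * 1 :=
    mul_le_mul (abs_walsh_le n x) (abs_walsh_le k x) (abs_nonneg _) zero_le_one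
  _ = 1 := by ring
lemma sign_sin_pi (q : ℕ) (t : ℝ) (h1 : (q:ℝ) < t) (h2 : t < q + 1) :
    Real.sign (Real.sin (Real.pi * t)) = (-1:ℝ)^q := by
  have h : Real.sin (Real.pi * t) = (-1:ℝ)^q * Real.sin (Real.pi * (t - q)) := by
    have : Real.pi * t = Real.pi * (t - q) + q * Real.pi := by ring
    rw [this, Real.sin_add_nat_mul_pi]
  have hpos : 0 < Real.sin (Real.pi * (t - q)) := by
    apply Real.sin_pos_of_pos_of_lt_pi
    · have : (0:ℝ) < t - q := by linarith
      positivity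
    · calc Real.pi * (t - q) < Real.pi * 1 :=
            mul_lt_mul_of_pos_left (by linarith) Real.pi_pos
        _ = Real.pi := mul_one _
  rcases Nat.even_or_odd q with he | ho
  · rw [h, he.neg_one_pow, one_mul, Real.sign_of_pos hpos]
  · rw [h, ho.neg_one_pow]
    simp only [neg_one_mul]
    rw [Real.sign_neg, Real.sign_of_pos hpos]

lemma rademacher_step {i N j : ℕ} (hi : i < N) (hj : j < 2^N) {x : ℝ}
    (hx : x ∈ Set.Ioo ((j:ℝ)/2^N) ((j+1)/2^N)) :
    rademacher (i+1) x = if j.testBit (N-1-i) then -1 else 1 := by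
  set d := N - 1 - i with hd
  set q := j / 2^d with hq
  have hq1 : q * 2^d ≤ j := Nat.div_mul_le_self j (2^d)
  have hq2 : j + 1 ≤ (q+1) * 2^d := by
    have h2d : 0 < 2^d := Nat.pow_pos (by norm_num)
    have hmod := Nat.mod_lt j h2d
    have hdm : 2^d * q + j % 2^d = j := Nat.div_add_mod j (2^d)
    calc j + 1 = 2^d * q + j % 2^d + 1 := by rw [hdm]
      _ ≤ 2^d * q + 2^d := by omega
      _ = (q+1) * 2^d := by ring
  obtain ⟨hx1, hx2⟩ := hx
  have hpow : (0:ℝ) < 2^N := by positivity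
  have hD : (0:ℝ) < (2:ℝ)^d := by positivity
  have hP : (0:ℝ) < (2:ℝ)^(i+1) := by positivity
  have hPD : (2:ℝ)^(i+1) * (2:ℝ)^d = 2^N := by rw [← pow_add]; congr 1; omega
  have e1 : (q:ℝ) * 2^d ≤ (j:ℝ) := by exact_mod_cast hq1
  have e2 : (j:ℝ) + 1 ≤ ((q:ℝ)+1)*2^d := by exact_mod_cast hq2
  rw [div_lt_iff₀ hpow] at hx1
  rw [lt_div_iff₀ hpow] at hx2
  have hkey1 : (q:ℝ) < 2^(i+1) * x := by nlinarith
  have hkey2 : (2:ℝ)^(i+1) * x < (q:ℝ) + 1 := by nlinarith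
  rw [show rademacher (i+1) x = Real.sign (Real.sin (Real.pi * (2^(i+1) * x))) by
    unfold rademacher; ring_nf]
  rw [sign_sin_pi q _ hkey1 hkey2]
  rw [Nat.testBit_eq_decide_div_mod_eq, ← hq]
  rcases Nat.even_or_odd q with he | ho
  · rw [he.neg_one_pow]; simp [Nat.even_iff.mp he]
  · rw [ho.neg_one_pow]; simp [Nat.odd_iff.mp ho]

noncomputable def wval (N n j : ℕ) : ℝ :=
  ∏ i ∈ Finset.range N, if n.testBit i ∧ j.testBit (N-1-i) then (-1:ℝ) else 1

lemma testBit_false_of_ge {n i N : ℕ} (hn : n < 2^N) (hi : N ≤ i) : n.testBit i = false :=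
  Nat.testBit_lt_two_pow (lt_of_lt_of_le hn (Nat.pow_le_pow_right (by norm_num) hi))

lemma walsh_step {N n j : ℕ} (hn : n < 2^N) (hj : j < 2^N) {x : ℝ}
    (hx : x ∈ Set.Ioo ((j:ℝ)/2^N) ((j+1)/2^N)) :
    walsh n x = wval N n j := by
  have h1 : walsh n x
      = ∏ i ∈ Finset.range (max (n+1) N), if n.testBit i then rademacher (i+1) x else 1 := by
    unfold walsh
    apply Finset.prod_subset (Finset.range_subset_range.mpr (le_max_left _ _))
    intro i _ hi
    simp only [Finset.mem_range, not_lt] at hi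
    have : n.testBit i = false := Nat.testBit_lt_two_pow
      (lt_of_lt_of_le (Nat.lt_two_pow_self (n := n)) (Nat.pow_le_pow_right (by norm_num) (by omega)))
    simp [this]
  have h2 : wval N n j
      = ∏ i ∈ Finset.range (max (n+1) N),
          if n.testBit i ∧ j.testBit (N-1-i) then (-1:ℝ) else 1 := by
    unfold wval
    apply Finset.prod_subset (Finset.range_subset_range.mpr (le_max_right _ _))
    intro i _ hi
    simp only [Finset.mem_range, not_lt] at hi
    simp [testBit_false_of_ge hn hi]
  rw [h1, h2]
  apply Finset.prod_congr rfl
  intro i _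
  by_cases hb : n.testBit i
  · have hiN : i < N := by
      by_contra hc
      rw [testBit_false_of_ge hn (not_lt.mp hc)] at hb
      exact Bool.false_ne_true hb
    rw [rademacher_step hiN hj hx]
    by_cases hc : j.testBit (N-1-i) <;> simp [hb, hc]
  · simp [hb]

lemma integral_Icc_eq_sum (f : ℝ → ℝ) (hf : IntegrableOn f (Set.Icc (0:ℝ) 1)) (N : ℕ) :
    ∫ x in Set.Icc (0:ℝ) 1, f x
      = ∑ j ∈ Finset.range (2^N), ∫ x in Set.Ioo ((j:ℝ)/2^N) ((j+1)/2^N), f x := by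
  have hpow : (0:ℝ) < 2^N := by positivity
  set a : ℕ → ℝ := fun j => (j:ℝ)/2^N with ha
  have hmono : ∀ j : ℕ, a j ≤ a (j+1) := by
    intro j
    apply div_le_div_of_nonneg_right ?_ hpow.le
    push_cast; linarith
  have hsub : ∀ j : ℕ, j + 1 ≤ 2^N → Set.Icc (a j) (a (j+1)) ⊆ Set.Icc (0:ℝ) 1 := by
    intro j hj
    apply Set.Icc_subset_Icc
    · simp only [ha]; positivity
    · simp only [ha]
      rw [div_le_one hpow]
      push_cast
      calc ((j:ℝ)+1) ≤ ((2^N : ℕ) : ℝ) := by exact_mod_cast hj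
        _ = 2^N := by push_cast; ring
  have hint : ∀ j < 2^N, IntervalIntegrable f volume (a j) (a (j+1)) := by
    intro j hj
    apply IntegrableOn.intervalIntegrable
    rw [Set.uIcc_of_le (hmono j)]
    exact hf.mono_set (hsub j hj)
  have key := intervalIntegral.sum_integral_adjacent_intervals hint
  have h0 : a 0 = 0 := by simp [ha]
  have h1 : a (2^N) = 1 := by
    simp only [ha]; push_cast; field_simp
  rw [h0, h1] at key
  rw [MeasureTheory.integral_Icc_eq_integral_Ioc,
    ← intervalIntegral.integral_of_le (by norm_num : (0:ℝ) ≤ 1), ← key]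
  apply Finset.sum_congr rfl
  intro j _
  rw [intervalIntegral.integral_of_le (hmono j), MeasureTheory.integral_Ioc_eq_integral_Ioo]
  simp [ha]

lemma sum_prod_testBit (f : ℕ → Bool → ℝ) : ∀ N : ℕ,
    ∑ j ∈ Finset.range (2^N), ∏ i ∈ Finset.range N, f i (j.testBit i)
      = ∏ i ∈ Finset.range N, (f i false + f i true) := by
  intro N
  induction N with
  | zero => simp
  | succ N ih =>
    rw [pow_succ, mul_two, Finset.sum_range_add]
    have hA : ∀ j ∈ Finset.range (2^N),
        ∏ i ∈ Finset.range (N+1), f i (j.testBit i)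
          = (∏ i ∈ Finset.range N, f i (j.testBit i)) * f N false := by
      intro j hj
      rw [Finset.prod_range_succ, Nat.testBit_lt_two_pow (Finset.mem_range.mp hj)]
    have hB : ∀ j ∈ Finset.range (2^N),
        ∏ i ∈ Finset.range (N+1), f i ((2^N + j).testBit i)
          = (∏ i ∈ Finset.range N, f i (j.testBit i)) * f N true := by
      intro j hj
      rw [Finset.prod_range_succ, Nat.testBit_two_pow_add_eq,
        Nat.testBit_lt_two_pow (Finset.mem_range.mp hj)]
      simp only [Bool.not_false]
      congr 1
      apply Finset.prod_congr rfl
      intro i hi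
      rw [Nat.testBit_two_pow_add_gt (Finset.mem_range.mp hi)]
    rw [Finset.sum_congr rfl hA, Finset.sum_congr rfl hB, ← Finset.sum_mul, ← Finset.sum_mul,
      ih, Finset.prod_range_succ]
    ring

lemma prod_sum_eq (N n k : ℕ) (hn : n < 2^N) (hk : k < 2^N) :
    ∑ j ∈ Finset.range (2^N), wval N n j * wval N k j
      = if n = k then (2^N : ℝ) else 0 := by
  set g : ℕ → Bool → ℝ := fun i b =>
    (if n.testBit i ∧ b = true then (-1:ℝ) else 1) * (if k.testBit i ∧ b = true then (-1:ℝ) else 1)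
    with hg
  have hstep : ∀ j ∈ Finset.range (2^N), wval N n j * wval N k j
      = ∏ i ∈ Finset.range N, (fun i b => g (N-1-i) b) i (j.testBit i) := by
    intro j _
    unfold wval
    rw [← Finset.prod_mul_distrib]
    rw [← Finset.prod_range_reflect (fun i => g i (j.testBit (N-1-i))) N]
    apply Finset.prod_congr rfl
    intro i hi
    have : N - 1 - (N - 1 - i) = i := by
      have := Finset.mem_range.mp hi; omega
    simp only [hg, this]
  rw [Finset.sum_congr rfl hstep, sum_prod_testBit]
  rw [Finset.prod_range_reflect (fun i => g i false + g i true) N]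
  have hfac : ∀ i, g i false + g i true
      = if n.testBit i = k.testBit i then (2:ℝ) else 0 := by
    intro i
    simp only [hg]
    by_cases h1 : n.testBit i <;> by_cases h2 : k.testBit i <;> simp [h1, h2] <;> norm_num
  simp only [hfac]
  by_cases h : n = k
  · subst h
    simp [Finset.prod_const]
  · rw [if_neg h]
    have : ∃ i, n.testBit i ≠ k.testBit i := by
      by_contra hc
      push_neg at hc
      exact h (Nat.eq_of_testBit_eq hc)
    obtain ⟨i, hi⟩ := this
    have hiN : i < N := by
      by_contra hc
      rw [testBit_false_of_ge hn (not_lt.mp hc), testBit_false_of_ge hk (not_lt.mp hc)] at hi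
      exact hi rfl
    exact Finset.prod_eq_zero (Finset.mem_range.mpr hiN) (by simp [hi])

lemma walsh_orthonormal {N n k : ℕ} (hn : n < 2^N) (hk : k < 2^N) :
    ∫ x in Set.Icc (0:ℝ) 1, walsh n x * walsh k x = if n = k then 1 else 0 := by
  rw [integral_Icc_eq_sum _ (integrableOn_walsh_mul n k) N]
  have hpow : (0:ℝ) < 2^N := by positivity
  have hstep : ∀ j ∈ Finset.range (2^N),
      (∫ x in Set.Ioo ((j:ℝ)/2^N) ((j+1)/2^N), walsh n x * walsh k x)
        = (wval N n j * wval N k j) * (1/2^N) := by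
    intro j hj
    have hj' := Finset.mem_range.mp hj
    rw [MeasureTheory.setIntegral_congr_fun measurableSet_Ioo
      (g := fun _ => wval N n j * wval N k j) (fun x hx => by
        rw [walsh_step hn hj' hx, walsh_step hk hj' hx])]
    rw [setIntegral_const, Real.volume_real_Ioo, smul_eq_mul]
    have : ((j:ℝ)+1)/2^N - (j:ℝ)/2^N = 1/2^N := by ring
    rw [this, max_eq_left (by positivity : (0:ℝ) ≤ 1/2^N)]
    ring
  rw [Finset.sum_congr rfl hstep, ← Finset.sum_mul, prod_sum_eq N n k hn hk]
  by_cases h : n = k <;> simp [h]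

lemma walsh_zero_eq (x : ℝ) : walsh 0 x = 1 := by simp [walsh]

lemma measurable_S (s : Finset ℕ) (a : ℕ → ℝ) :
    Measurable (fun x => ∑ k ∈ s, a k * walsh k x) :=
  Finset.measurable_sum _ fun k _ => (measurable_walsh k).const_mul _

lemma abs_S_le (s : Finset ℕ) (a : ℕ → ℝ) (x : ℝ) :
    |∑ k ∈ s, a k * walsh k x| ≤ ∑ k ∈ s, |a k| := by
  calc |∑ k ∈ s, a k * walsh k x| ≤ ∑ k ∈ s, |a k * walsh k x| := Finset.abs_sum_le_sum_abs _ _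
    _ ≤ ∑ k ∈ s, |a k| := Finset.sum_le_sum fun k _ => by
        rw [abs_mul]
        calc |a k| * |walsh k x| ≤ |a k| * 1 :=
            mul_le_mul_of_nonneg_left (abs_walsh_le k x) (abs_nonneg _)
          _ = |a k| := mul_one _

lemma integrableOn_S (s : Finset ℕ) (a : ℕ → ℝ) :
    IntegrableOn (fun x => ∑ k ∈ s, a k * walsh k x) (Set.Icc (0:ℝ) 1) := by
  refine Integrable.mono' (integrable_const (∑ k ∈ s, |a k|))
    (measurable_S s a).aestronglyMeasurable.restrict ?_
  filter_upwards with x using abs_S_le s a x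

lemma integrableOn_S_sq (s : Finset ℕ) (a : ℕ → ℝ) :
    IntegrableOn (fun x => (∑ k ∈ s, a k * walsh k x)^2) (Set.Icc (0:ℝ) 1) := by
  refine Integrable.mono' (integrable_const ((∑ k ∈ s, |a k|)^2))
    ((measurable_S s a).pow_const 2).aestronglyMeasurable.restrict ?_
  filter_upwards with x
  rw [Real.norm_eq_abs, abs_pow]
  exact pow_le_pow_left₀ (abs_nonneg _) (abs_S_le s a x) 2

lemma integral_sq_sum (s : Finset ℕ) (a : ℕ → ℝ) (N : ℕ) (hs : ∀ k ∈ s, k < 2^N) :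
    ∫ x in Set.Icc (0:ℝ) 1, (∑ k ∈ s, a k * walsh k x)^2 = ∑ k ∈ s, (a k)^2 := by
  have hint : ∀ k l : ℕ,
      IntegrableOn (fun x => (a k * a l) * (walsh k x * walsh l x)) (Set.Icc (0:ℝ) 1) :=
    fun k l => (integrableOn_walsh_mul k l).const_mul _
  have hexp : ∀ x, (∑ k ∈ s, a k * walsh k x)^2
      = ∑ k ∈ s, ∑ l ∈ s, (a k * a l) * (walsh k x * walsh l x) := by
    intro x
    rw [sq, Finset.sum_mul_sum]
    exact Finset.sum_congr rfl fun k _ => Finset.sum_congr rfl fun l _ => by ring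
  calc ∫ x in Set.Icc (0:ℝ) 1, (∑ k ∈ s, a k * walsh k x)^2
      = ∫ x in Set.Icc (0:ℝ) 1, ∑ k ∈ s, ∑ l ∈ s, (a k * a l) * (walsh k x * walsh l x) :=
        MeasureTheory.setIntegral_congr_fun measurableSet_Icc fun x _ => hexp x
    _ = ∑ k ∈ s, ∑ l ∈ s, ∫ x in Set.Icc (0:ℝ) 1, (a k * a l) * (walsh k x * walsh l x) := by
        rw [MeasureTheory.integral_finset_sum _
          (fun k _ => MeasureTheory.integrable_finset_sum _ (fun l _ => hint k l))]
        exact Finset.sum_congr rfl fun k _ =>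
          MeasureTheory.integral_finset_sum _ (fun l _ => hint k l)
    _ = ∑ k ∈ s, ∑ l ∈ s, (a k * a l) * (if k = l then 1 else 0) := by
        refine Finset.sum_congr rfl fun k hk => Finset.sum_congr rfl fun l hl => ?_
        rw [MeasureTheory.integral_const_mul, walsh_orthonormal (hs k hk) (hs l hl)]
    _ = ∑ k ∈ s, (a k)^2 := by
        refine Finset.sum_congr rfl fun k hk => ?_
        simp only [mul_ite, mul_one, mul_zero]
        rw [Finset.sum_ite_eq s k (fun l => a k * a l), if_pos hk, sq]

lemma L1_le_sqrt (s : Finset ℕ) (a : ℕ → ℝ) (N : ℕ) (hs : ∀ k ∈ s, k < 2^N) :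
    ∫ x in Set.Icc (0:ℝ) 1, |∑ k ∈ s, a k * walsh k x|
      ≤ Real.sqrt (∑ k ∈ s, (a k)^2) := by
  set A := ∑ k ∈ s, (a k)^2 with hA
  have hA0 : 0 ≤ A := Finset.sum_nonneg fun k _ => sq_nonneg _
  rcases eq_or_lt_of_le hA0 with h0 | hpos
  · have hz : ∀ k ∈ s, a k = 0 := by
      intro k hk
      have := (Finset.sum_eq_zero_iff_of_nonneg (fun k _ => sq_nonneg (a k))).mp h0.symm k hk
      exact pow_eq_zero_iff (by norm_num) |>.mp this
    have hSz : ∀ x : ℝ, ∑ k ∈ s, a k * walsh k x = 0 := fun x =>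
      Finset.sum_eq_zero fun k hk => by rw [hz k hk, zero_mul]
    simp only [hSz, abs_zero, MeasureTheory.integral_zero]
    positivity
  · set tv := Real.sqrt A with htvdef
    have htv : 0 < tv := Real.sqrt_pos.mpr hpos
    have htv2 : tv^2 = A := Real.sq_sqrt hA0
    have hptw : ∀ x : ℝ, |∑ k ∈ s, a k * walsh k x|
        ≤ ((∑ k ∈ s, a k * walsh k x)^2 / tv + tv)/2 := by
      intro x
      rw [div_add' _ _ _ htv.ne', div_div, le_div_iff₀ (by positivity : (0:ℝ) < tv * 2)]
      nlinarith [sq_nonneg (|∑ k ∈ s, a k * walsh k x| - tv), sq_abs (∑ k ∈ s, a k * walsh k x)]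
    calc ∫ x in Set.Icc (0:ℝ) 1, |∑ k ∈ s, a k * walsh k x|
        ≤ ∫ x in Set.Icc (0:ℝ) 1, ((∑ k ∈ s, a k * walsh k x)^2 / tv + tv)/2 := by
          apply MeasureTheory.integral_mono ((integrableOn_S s a).abs) ?_ hptw
          exact (((integrableOn_S_sq s a).div_const tv).add (integrable_const tv)).div_const 2
      _ = ((A / tv) + tv)/2 := by
          rw [MeasureTheory.integral_div]
          congr 1
          rw [MeasureTheory.integral_add ((integrableOn_S_sq s a).div_const tv)
            (integrable_const tv)]
          rw [MeasureTheory.integral_div, integral_sq_sum s a N hs]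
          congr 1
          rw [setIntegral_const, Real.volume_real_Icc, smul_eq_mul]
          norm_num
      _ = tv := by
          rw [← htv2]
          field_simp
          ring


theorem walsh_partial_L1_le_block_L2 (a : ℕ → ℝ) (m M : ℕ)
    (h1 : 2^m ≤ M) (h2 : M < 2^(m+1)) :
    ∫ x in Set.Icc (0:ℝ) 1, |∑ k ∈ Finset.Icc (2^m) M, a k * walsh k x|
      ≤ (∫ x in Set.Icc (0:ℝ) 1,
          |∑ k ∈ Finset.Ico (2^m) (2^(m+1)), a k * walsh k x| ^ (2:ℝ)) ^ ((1:ℝ)/2) := by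
  have hsN : ∀ k ∈ Finset.Icc (2^m) M, k < 2^(m+1) := by
    intro k hk; have := Finset.mem_Icc.mp hk; omega
  have htN : ∀ k ∈ Finset.Ico (2^m) (2^(m+1)), k < 2^(m+1) :=
    fun k hk => (Finset.mem_Ico.mp hk).2
  have hsub : Finset.Icc (2^m) M ⊆ Finset.Ico (2^m) (2^(m+1)) := by
    intro k hk; have := Finset.mem_Icc.mp hk; rw [Finset.mem_Ico]; omega
  have hRHS : (∫ x in Set.Icc (0:ℝ) 1,
      |∑ k ∈ Finset.Ico (2^m) (2^(m+1)), a k * walsh k x| ^ (2:ℝ))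
        = ∑ k ∈ Finset.Ico (2^m) (2^(m+1)), (a k)^2 := by
    rw [← integral_sq_sum (Finset.Ico (2^m) (2^(m+1))) a (m+1) htN]
    apply MeasureTheory.setIntegral_congr_fun measurableSet_Icc
    intro x _
    show |∑ k ∈ Finset.Ico (2 ^ m) (2 ^ (m + 1)), a k * walsh k x| ^ ((2:ℕ):ℝ)
      = (∑ k ∈ Finset.Ico (2 ^ m) (2 ^ (m + 1)), a k * walsh k x) ^ 2
    rw [Real.rpow_natCast, sq_abs]
  rw [hRHS]
  calc ∫ x in Set.Icc (0:ℝ) 1, |∑ k ∈ Finset.Icc (2^m) M, a k * walsh k x|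
      ≤ Real.sqrt (∑ k ∈ Finset.Icc (2^m) M, (a k)^2) :=
        L1_le_sqrt _ a (m+1) hsN
    _ ≤ Real.sqrt (∑ k ∈ Finset.Ico (2^m) (2^(m+1)), (a k)^2) :=
        Real.sqrt_le_sqrt
          (Finset.sum_le_sum_of_subset_of_nonneg hsub fun k _ _ => sq_nonneg _)
    _ = _ := Real.sqrt_eq_rpow _
end
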